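/- Let f : ℝⁿ → ℝ be L_f-Lipschitz smooth and g : ℝⁿ → ℝ ∪ {+∞} be proper, lsc and convex, and set φ = f + g, ψ_γ = φ ∘ prox_{γg}. Then ψ_γ is locally Lipschitz with pointwise Lipschitz modulus satisfying lip ψ_γ(x) ≤ ‖∇f(prox_{γg}(x))‖ + (1/γ)‖x - prox_{γg}(x)‖ for every x. -/
import Mathlib


open scoped RealInnerProductSpace
open Filter

noncomputable section

abbrev E (n : ℕ) := EuclideanSpace ℝ (Fin n)

/-- `g` is proper, lower semicontinuous and convex (extended-real-valued). -/
def ProperConvexLsc {n : ℕ} (g : E n → EReal) : Prop :=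
  (∃ x, g x ≠ ⊤) ∧ (∀ x, g x ≠ ⊥) ∧ LowerSemicontinuous g ∧
    ∀ x y : E n, ∀ a b : ℝ, 0 ≤ a → 0 ≤ b → a + b = 1 →
      g (a • x + b • y) ≤ (a : ℝ) * g x + (b : ℝ) * g y

/-- `P` is the proximal operator of `g` with stepsize `γ`. -/
def IsProx {n : ℕ} (g : E n → EReal) (γ : ℝ) (P : E n → E n) : Prop :=
  ∀ z u, g (P z) + (((1 / (2 * γ)) * ‖P z - z‖ ^ 2 : ℝ) : EReal)
        ≤ g u + (((1 / (2 * γ)) * ‖u - z‖ ^ 2 : ℝ) : EReal)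

/-- Pointwise Lipschitz modulus: `lip h(x) = limsup_{y,z → x, y ≠ z} |h y - h z|/‖y - z‖`. -/
def lipMod {n : ℕ} (h : E n → ℝ) (x : E n) : ENNReal :=
  Filter.limsup (fun p : E n × E n => ENNReal.ofReal (|h p.1 - h p.2| / ‖p.1 - p.2‖))
    ((nhds (x, x)) ⊓ Filter.principal {p : E n × E n | p.1 ≠ p.2})

/-- `f` is `L`-Lipschitz smooth with gradient `f'`. -/
def LipSmooth {n : ℕ} (f : E n → ℝ) (f' : E n → E n) (L : ℝ) : Prop :=
  (∀ x, HasGradientAt f (f' x) x) ∧ LipschitzWith L.toNNReal f'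

set_option maxHeartbeats 2000000 in
/-- `ψ_γ = (f + g) ∘ prox_{γg}` is locally Lipschitz with
`lip ψ_γ(x) ≤ ‖∇f(prox_{γg}(x))‖ + (1/γ)‖x - prox_{γg}(x)‖`. -/
theorem psi_locally_lipschitz {n : ℕ} (f : E n → ℝ) (f' : E n → E n) (L : ℝ) (hL : 0 ≤ L)
    (hf : LipSmooth f f' L) (g : E n → EReal) (γ : ℝ) (hγ : 0 < γ)
    (hg : ProperConvexLsc g) (P : E n → E n) (hP : IsProx g γ P) :
    LocallyLipschitz (fun x => f (P x) + (g (P x)).toReal) ∧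
      ∀ x, lipMod (fun y => f (P y) + (g (P y)).toReal) x ≤
        ENNReal.ofReal (‖f' (P x)‖ + (1 / γ) * ‖x - P x‖) := by
  obtain ⟨hgrad, hlip⟩ := hf
  obtain ⟨⟨x₀, hx₀⟩, hbot, _, hconv⟩ := hg
  have hσ : (0:ℝ) < 1 / γ := by positivity
  have hc : (0:ℝ) < 1 / (2 * γ) := by positivity
  have hlipf' : ∀ a b, ‖f' a - f' b‖ ≤ L * ‖a - b‖ := by
    intro a b
    have h := hlip.dist_le_mul a b
    rwa [dist_eq_norm, dist_eq_norm, Real.coe_toNNReal L hL] at h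
  -- finiteness of g ∘ P
  have hfin : ∀ z, g (P z) = (((g (P z)).toReal : ℝ) : EReal) := by
    intro z
    refine (EReal.coe_toReal ?_ (hbot _)).symm
    intro hT
    have h := hP z x₀
    rw [hT, EReal.top_add_of_ne_bot (EReal.coe_ne_bot _)] at h
    exact (EReal.add_lt_top hx₀ (EReal.coe_ne_top _)).ne (top_le_iff.mp h)
  -- key inequality from optimality + convexity
  have hkey : ∀ y z : E n, (g (P z)).toReal - (g (P y)).toReal
      ≤ (1 / γ) * ⟪P y - P z, P z - z⟫ := by
    intro y z
    have main : ∀ t : ℝ, 0 < t → t ≤ 1 →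
        (g (P z)).toReal - (g (P y)).toReal
          ≤ (1 / γ) * ⟪P y - P z, P z - z⟫ + (1 / (2 * γ)) * t * ‖P y - P z‖ ^ 2 := by
      intro t ht ht1
      have hcv := hconv (P y) (P z) t (1 - t) ht.le (by linarith) (by ring)
      rw [hfin y, hfin z, ← EReal.coe_mul, ← EReal.coe_mul, ← EReal.coe_add] at hcv
      set u := t • P y + (1 - t) • P z with hu
      have hut : g u ≠ ⊤ := fun hT => by
        rw [hT] at hcv; exact (EReal.coe_lt_top _).not_ge hcv
      have hucoe : g u = (((g u).toReal : ℝ) : EReal) := (EReal.coe_toReal hut (hbot u)).symm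
      rw [hucoe] at hcv
      have hcvr : (g u).toReal ≤ t * (g (P y)).toReal + (1 - t) * (g (P z)).toReal :=
        EReal.coe_le_coe_iff.mp hcv
      have hpx := hP z u
      rw [hfin z, hucoe, ← EReal.coe_add, ← EReal.coe_add] at hpx
      have hpxr := EReal.coe_le_coe_iff.mp hpx
      have hexp : u - z = (P z - z) + t • (P y - P z) := by rw [hu]; module
      have hn : ‖u - z‖ ^ 2 = ‖P z - z‖ ^ 2 + 2 * (t * ⟪P z - z, P y - P z⟫)
          + t ^ 2 * ‖P y - P z‖ ^ 2 := by
        rw [hexp, norm_add_sq_real, real_inner_smul_right, norm_smul, Real.norm_eq_abs,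
          mul_pow, sq_abs]
      rw [hn] at hpxr
      have h2 : t * ((g (P z)).toReal - (g (P y)).toReal)
          ≤ t * ((1 / γ) * ⟪P z - z, P y - P z⟫ + (1 / (2 * γ)) * t * ‖P y - P z‖ ^ 2) := by
        have hgc : (1 : ℝ) / γ = 2 * (1 / (2 * γ)) := by field_simp
        rw [hgc]; nlinarith [hpxr, hcvr]
      have h3 := le_of_mul_le_mul_left (by linarith [h2] :
        t * ((g (P z)).toReal - (g (P y)).toReal)
          ≤ t * ((1 / γ) * ⟪P z - z, P y - P z⟫ + (1 / (2 * γ)) * t * ‖P y - P z‖ ^ 2)) ht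
      have hco : ⟪P z - z, P y - P z⟫ = ⟪P y - P z, P z - z⟫ := real_inner_comm _ _
      rw [hco] at h3
      linarith [h3]
    refine le_of_forall_pos_le_add ?_
    intro ε hε
    set N := ‖P y - P z‖ ^ 2 with hN
    have hN0 : 0 ≤ N := sq_nonneg _
    set t := min 1 (ε / ((1 / (2 * γ)) * N + 1)) with htdef
    have htpos : 0 < t := lt_min one_pos (by positivity)
    have ht1 : t ≤ 1 := min_le_left _ _
    have ht2 : t ≤ ε / ((1 / (2 * γ)) * N + 1) := min_le_right _ _
    have h5 : (1 / (2 * γ)) * t * N ≤ ε := by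
      have hd : (0:ℝ) < (1 / (2 * γ)) * N + 1 := by positivity
      have := mul_le_mul_of_nonneg_left ht2 (mul_nonneg hc.le hN0)
      have h6 : (1 / (2 * γ)) * N * (ε / ((1 / (2 * γ)) * N + 1)) ≤ ε := by
        rw [mul_comm, div_mul_eq_mul_div, div_le_iff₀ hd]
        nlinarith [hε.le, mul_nonneg hc.le hN0]
      nlinarith [this, h6]
    linarith [main t htpos ht1, h5]
  -- nonexpansiveness of P
  have hne : ∀ y z : E n, ‖P y - P z‖ ≤ ‖y - z‖ := by
    intro y z
    have h1 := hkey y z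
    have h2 := hkey z y
    have h3 : 0 ≤ ⟪P y - P z, P z - z⟫ + ⟪P z - P y, P y - y⟫ := by
      by_contra hcon
      push_neg at hcon
      nlinarith [h1, h2, mul_pos hσ (neg_pos.mpr hcon)]
    have hexpand : ⟪P y - P z, P z - z⟫ + ⟪P z - P y, P y - y⟫
        = ⟪P y - P z, y - z⟫ - ‖P y - P z‖ ^ 2 := by
      have e1 : P z - z = (y - z) - (P y - P z) - (y - P y) := by module
      have e2 : P z - P y = -(P y - P z) := by module
      have e3 : P y - y = -(y - P y) := by module
      rw [e1, e2, e3, inner_neg_left, inner_neg_right, inner_sub_right, inner_sub_right,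
        real_inner_self_eq_norm_sq]
      ring
    rw [hexpand] at h3
    nlinarith [real_inner_le_norm (P y - P z) (y - z), norm_nonneg (P y - P z),
      norm_nonneg (y - z)]
  have hPc : Continuous P := by
    refine (LipschitzWith.of_dist_le_mul (K := 1) fun a b => ?_).continuous
    rw [dist_eq_norm, dist_eq_norm]
    simpa using hne a b
  have hf'c : Continuous f' := hlip.continuous
  -- main two-sided estimate
  have hmain : ∀ y z : E n,
      (f (P y) + (g (P y)).toReal) - (f (P z) + (g (P z)).toReal)
        ≤ (‖f' (P z)‖ + L * ‖y - z‖ + (1 / γ) * ‖P y - y‖) * ‖y - z‖ := by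
    intro y z
    have hstep : ‖f (P y) - f (P z)‖ ≤ (‖f' (P z)‖ + L * ‖P y - P z‖) * ‖P y - P z‖ := by
      have hmem : P y ∈ Metric.closedBall (P z) ‖P y - P z‖ := by
        rw [Metric.mem_closedBall, dist_eq_norm]
      have hbd : ∀ w ∈ Metric.closedBall (P z) ‖P y - P z‖,
          ‖(InnerProductSpace.toDual ℝ (E n)) (f' w)‖ ≤ ‖f' (P z)‖ + L * ‖P y - P z‖ := by
        intro w hw
        rw [(InnerProductSpace.toDual ℝ (E n)).norm_map]
        have h1 : ‖f' w - f' (P z)‖ ≤ L * ‖w - P z‖ := hlipf' w (P z)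
        have h2 : ‖w - P z‖ ≤ ‖P y - P z‖ := by
          rw [Metric.mem_closedBall, dist_eq_norm] at hw; exact hw
        have h3 : ‖f' w‖ - ‖f' (P z)‖ ≤ ‖f' w - f' (P z)‖ := norm_sub_norm_le _ _
        nlinarith [norm_nonneg (w - P z)]
      exact Convex.norm_image_sub_le_of_norm_hasFDerivWithin_le
        (fun w _ => (hgrad w).hasFDerivAt.hasFDerivWithinAt) hbd
        (convex_closedBall _ _) (Metric.mem_closedBall_self (norm_nonneg _)) hmem
    have hfpart : f (P y) - f (P z) ≤ (‖f' (P z)‖ + L * ‖y - z‖) * ‖y - z‖ := by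
      have h4 : f (P y) - f (P z) ≤ (‖f' (P z)‖ + L * ‖P y - P z‖) * ‖P y - P z‖ := by
        have h5 := hstep
        rw [Real.norm_eq_abs] at h5
        exact le_trans (le_abs_self _) h5
      nlinarith [h4, hne y z, norm_nonneg (P y - P z), norm_nonneg (y - z),
        norm_nonneg (f' (P z)), hL, mul_le_mul_of_nonneg_left (hne y z) hL]
    have hgpart : (g (P y)).toReal - (g (P z)).toReal
        ≤ (1 / γ) * (‖P y - P z‖ * ‖P y - y‖) := by
      have h5 := hkey z y
      have h6 : ⟪P z - P y, P y - y⟫ ≤ ‖P z - P y‖ * ‖P y - y‖ := real_inner_le_norm _ _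
      rw [norm_sub_rev (P z) (P y)] at h6
      nlinarith [h5, h6]
    have h7 := mul_le_mul_of_nonneg_left (hne y z)
      (mul_nonneg hσ.le (norm_nonneg (P y - y)))
    nlinarith [hfpart, hgpart, h7]
  constructor
  · -- local Lipschitz
    intro x
    set K : ℝ := ‖f' (P x)‖ + 3 * L + (1 / γ) * (‖P x - x‖ + 2) with hK
    have hK0 : 0 ≤ K := by positivity
    refine ⟨K.toNNReal, Metric.ball x 1, Metric.ball_mem_nhds x one_pos, ?_⟩
    rw [lipschitzOnWith_iff_dist_le_mul]
    intro y hy z hz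
    rw [Metric.mem_ball, dist_eq_norm] at hy hz
    rw [Real.dist_eq, Real.coe_toNNReal K hK0, dist_eq_norm]
    have hQK : ∀ a b : E n, ‖a - x‖ < 1 → ‖b - x‖ < 1 →
        ‖f' (P b)‖ + L * ‖a - b‖ + (1 / γ) * ‖P a - a‖ ≤ K := by
      intro a b ha hb
      have q1 : ‖f' (P b)‖ ≤ ‖f' (P x)‖ + L * ‖b - x‖ := by
        have := hlipf' (P b) (P x)
        have h2 := hne b x
        have h3 : ‖f' (P b)‖ - ‖f' (P x)‖ ≤ ‖f' (P b) - f' (P x)‖ := norm_sub_norm_le _ _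
        nlinarith [hL]
      have q2 : ‖a - b‖ ≤ ‖a - x‖ + ‖b - x‖ := by
        have : a - b = (a - x) - (b - x) := by module
        rw [this]; exact norm_sub_le _ _
      have q3 : ‖P a - a‖ ≤ ‖P x - x‖ + 2 := by
        have h1 : P a - a = (P a - P x) + (P x - x) + (x - a) := by module
        have h2 : ‖P a - P x‖ ≤ ‖a - x‖ := hne a x
        have h3 : ‖x - a‖ = ‖a - x‖ := norm_sub_rev _ _
        calc ‖P a - a‖ ≤ ‖P a - P x‖ + ‖P x - x‖ + ‖x - a‖ := by
              rw [h1]; exact norm_add₃_le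
          _ ≤ ‖P x - x‖ + 2 := by rw [h3]; linarith
      rw [hK]
      nlinarith [hL, hσ.le, norm_nonneg (b - x)]
    rw [abs_sub_le_iff]
    constructor
    · calc f (P y) + (g (P y)).toReal - (f (P z) + (g (P z)).toReal)
          ≤ (‖f' (P z)‖ + L * ‖y - z‖ + (1 / γ) * ‖P y - y‖) * ‖y - z‖ := hmain y z
        _ ≤ K * ‖y - z‖ := mul_le_mul_of_nonneg_right (hQK y z hy hz) (norm_nonneg _)
    · calc f (P z) + (g (P z)).toReal - (f (P y) + (g (P y)).toReal)
          ≤ (‖f' (P y)‖ + L * ‖z - y‖ + (1 / γ) * ‖P z - z‖) * ‖z - y‖ := hmain z y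
        _ ≤ K * ‖z - y‖ := mul_le_mul_of_nonneg_right (hQK z y hz hy) (norm_nonneg _)
        _ = K * ‖y - z‖ := by rw [norm_sub_rev]
  · -- the limsup bound
    intro x
    set T : ℝ := ‖f' (P x)‖ + (1 / γ) * ‖x - P x‖ with hT
    have hT0 : 0 ≤ T := by positivity
    apply ENNReal.le_of_forall_pos_le_add
    intro ε hε _
    have hεR : (0:ℝ) < ε := hε
    have hTe : ENNReal.ofReal (T + ε) ≤ ENNReal.ofReal T + (ε : ENNReal) := by
      rw [ENNReal.ofReal_add hT0 ε.coe_nonneg, ENNReal.ofReal_coe_nnreal]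
    refine le_trans ?_ hTe
    set C : E n × E n → ℝ := fun p =>
      max (‖f' (P p.2)‖ + L * ‖p.1 - p.2‖ + (1 / γ) * ‖P p.1 - p.1‖)
        (‖f' (P p.1)‖ + L * ‖p.2 - p.1‖ + (1 / γ) * ‖P p.2 - p.2‖) with hC
    have hCc : Continuous C := by
      have c1 : Continuous fun p : E n × E n =>
          ‖f' (P p.2)‖ + L * ‖p.1 - p.2‖ + (1 / γ) * ‖P p.1 - p.1‖ :=
        (((hf'c.comp (hPc.comp continuous_snd)).norm).add
          (continuous_const.mul ((continuous_fst.sub continuous_snd).norm))).add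
          (continuous_const.mul (((hPc.comp continuous_fst).sub continuous_fst).norm))
      have c2 : Continuous fun p : E n × E n =>
          ‖f' (P p.1)‖ + L * ‖p.2 - p.1‖ + (1 / γ) * ‖P p.2 - p.2‖ :=
        (((hf'c.comp (hPc.comp continuous_fst)).norm).add
          (continuous_const.mul ((continuous_snd.sub continuous_fst).norm))).add
          (continuous_const.mul (((hPc.comp continuous_snd).sub continuous_snd).norm))
      exact c1.max c2
    have hCxx : C (x, x) = T := by
      simp only [hC, sub_self, norm_zero, mul_zero, add_zero, max_self, hT,
        norm_sub_rev (P x) x]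
    have hev1 : ∀ᶠ p in nhds (x, x), C p < T + ε := by
      have htend : Tendsto C (nhds (x, x)) (nhds T) := by
        rw [← hCxx]; exact hCc.continuousAt
      exact htend.eventually (gt_mem_nhds (by linarith))
    have hne2 : ∀ᶠ p in (nhds (x, x) ⊓ Filter.principal {p : E n × E n | p.1 ≠ p.2}),
        p.1 ≠ p.2 :=
      Filter.eventually_inf_principal.mpr (Filter.Eventually.of_forall fun p hp => hp)
    refine Filter.limsup_le_of_le ?_ ?_
    · isBoundedDefault
    filter_upwards [hev1.filter_mono inf_le_left, hne2] with p h1 h2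
    apply ENNReal.ofReal_le_ofReal
    have hpos : (0:ℝ) < ‖p.1 - p.2‖ := by
      rw [norm_pos_iff]; exact sub_ne_zero_of_ne h2
    rw [div_le_iff₀ hpos, abs_sub_le_iff]
    have hCp1 : ‖f' (P p.2)‖ + L * ‖p.1 - p.2‖ + (1 / γ) * ‖P p.1 - p.1‖ ≤ C p :=
      le_max_left _ _
    have hCp2 : ‖f' (P p.1)‖ + L * ‖p.2 - p.1‖ + (1 / γ) * ‖P p.2 - p.2‖ ≤ C p :=
      le_max_right _ _
    constructor
    · calc f (P p.1) + (g (P p.1)).toReal - (f (P p.2) + (g (P p.2)).toReal)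
          ≤ (‖f' (P p.2)‖ + L * ‖p.1 - p.2‖ + (1 / γ) * ‖P p.1 - p.1‖) * ‖p.1 - p.2‖ :=
            hmain p.1 p.2
        _ ≤ C p * ‖p.1 - p.2‖ := mul_le_mul_of_nonneg_right hCp1 (norm_nonneg _)
        _ ≤ (T + ε) * ‖p.1 - p.2‖ := mul_le_mul_of_nonneg_right h1.le (norm_nonneg _)
    · calc f (P p.2) + (g (P p.2)).toReal - (f (P p.1) + (g (P p.1)).toReal)
          ≤ (‖f' (P p.1)‖ + L * ‖p.2 - p.1‖ + (1 / γ) * ‖P p.2 - p.2‖) * ‖p.2 - p.1‖ :=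
            hmain p.2 p.1
        _ ≤ C p * ‖p.2 - p.1‖ := mul_le_mul_of_nonneg_right hCp2 (norm_nonneg _)
        _ = C p * ‖p.1 - p.2‖ := by rw [norm_sub_rev]
        _ ≤ (T + ε) * ‖p.1 - p.2‖ := mul_le_mul_of_nonneg_right h1.le (norm_nonneg _)
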